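/- Let S be a nonempty finite type and P : S → S → ℝ a stochastic matrix (P s t ≥ 0 for all s, t, and ∑_t P s t = 1 for every s). Suppose P is fully aperiodic: there do not exist an integer d > 1 and pairwise disjoint nonempty subsets A_0, …, A_{d−1} of S such that for every i < d and every s ∈ A_i, ∑_{t ∈ A_{(i+1) mod d}} P s t = 1. Then for every pair of states s, q ∈ S, the sequence n ↦ (P^n) s q of n-step transition probabilities (entries of the n-th matrix power of P) converges as n → ∞. -/

import Mathlib

open Filter

set_option linter.unusedSectionVars false
set_option maxHeartbeats 1000000

section MarkovAux

variable {S : Type} [Fintype S] [Nonempty S] [DecidableEq S]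

private lemma pow_entry_nonneg (P : Matrix S S ℝ) (h : ∀ s t, 0 ≤ P s t) :
    ∀ (n : ℕ) (s t : S), 0 ≤ (P ^ n) s t := by
  intro n
  induction n with
  | zero =>
    intro s t
    rw [pow_zero]
    by_cases hst : s = t <;> simp [Matrix.one_apply, hst]
  | succ n ih =>
    intro s t
    rw [pow_succ, Matrix.mul_apply]
    exact Finset.sum_nonneg fun x _ => mul_nonneg (ih s x) (h x t)

private lemma pow_row_sum (P : Matrix S S ℝ) (hrow : ∀ s, ∑ t, P s t = 1) :
    ∀ (n : ℕ) (s : S), ∑ t, (P ^ n) s t = 1 := by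
  intro n
  induction n with
  | zero => intro s; simp [Matrix.one_apply]
  | succ n ih =>
    intro s
    simp only [pow_succ, Matrix.mul_apply]
    rw [Finset.sum_comm]
    calc ∑ x, ∑ t, (P ^ n) s x * P x t
        = ∑ x, (P ^ n) s x * ∑ t, P x t := by simp [Finset.mul_sum]
      _ = ∑ x, (P ^ n) s x := by simp [hrow]
      _ = 1 := ih s

private lemma exists_pos_of_sum_one {w : S → ℝ} (hnn : ∀ t, 0 ≤ w t)
    (hs : ∑ t, w t = 1) : ∃ t, 0 < w t := by
  by_contra h
  push_neg at h
  have : ∀ t ∈ Finset.univ, w t = 0 := fun t _ => le_antisymm (h t) (hnn t)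
  rw [Finset.sum_congr rfl this] at hs
  simp at hs


private lemma step_eq (P : Matrix S S ℝ) (hnonneg : ∀ s t, 0 ≤ P s t)
    (hrow : ∀ s, ∑ t, P s t = 1) (lam : ℂ) (hlam : ‖lam‖ = 1)
    (v : S → ℂ) (heig : (P.map (Complex.ofReal)).mulVec v = lam • v)
    (m : ℝ) (hm0 : 0 < m) (hm : ∀ t, ‖v t‖ ≤ m)
    (s : S) (hs : ‖v s‖ = m) :
    ∀ t, 0 < P s t → v t = lam * v s := by
  set w : ℂ := lam * v s with hw_def
  have hw : ‖w‖ = m := by rw [hw_def, norm_mul, hlam, one_mul, hs]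
  have hsum : ∑ t, (P s t : ℂ) * v t = w := by
    have := congrFun heig s
    simpa [Matrix.mulVec, dotProduct, Matrix.map_apply] using this
  have hre : ∀ t, ((starRingEnd ℂ) w * v t).re ≤ m ^ 2 := by
    intro t
    calc ((starRingEnd ℂ) w * v t).re ≤ ‖(starRingEnd ℂ) w * v t‖ := Complex.re_le_norm _
      _ = ‖w‖ * ‖v t‖ := by rw [norm_mul, RCLike.norm_conj]
      _ ≤ m * m := mul_le_mul (le_of_eq hw) (hm t) (norm_nonneg _) (le_of_lt hm0)
      _ = m ^ 2 := by ring
  have hww : (starRingEnd ℂ) w * w = ((m ^ 2 : ℝ) : ℂ) := by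
    rw [mul_comm, Complex.mul_conj]
    norm_cast
    rw [Complex.normSq_eq_norm_sq, hw]
  have key : ∑ t, P s t * (m ^ 2 - ((starRingEnd ℂ) w * v t).re) = 0 := by
    have h1 : ∑ t, P s t * ((starRingEnd ℂ) w * v t).re = m ^ 2 := by
      have h2 : ((starRingEnd ℂ) w * ∑ t, (P s t : ℂ) * v t).re = m ^ 2 := by
        rw [hsum, hww, Complex.ofReal_re]
      rw [Finset.mul_sum] at h2
      rw [← h2, Complex.re_sum]
      refine Finset.sum_congr rfl fun t _ => ?_
      have : (starRingEnd ℂ) w * ((P s t : ℂ) * v t) = (P s t : ℂ) * ((starRingEnd ℂ) w * v t) := by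
        ring
      rw [this, Complex.re_ofReal_mul]
    calc ∑ t, P s t * (m ^ 2 - ((starRingEnd ℂ) w * v t).re)
        = (∑ t, P s t) * m ^ 2 - ∑ t, P s t * ((starRingEnd ℂ) w * v t).re := by
          rw [Finset.sum_mul, ← Finset.sum_sub_distrib]
          exact Finset.sum_congr rfl fun t _ => by ring
      _ = 0 := by rw [hrow, h1, one_mul, sub_self]
  have hzero : ∀ t ∈ Finset.univ, P s t * (m ^ 2 - ((starRingEnd ℂ) w * v t).re) = 0 :=
    (Finset.sum_eq_zero_iff_of_nonneg fun t _ =>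
      mul_nonneg (hnonneg s t) (by linarith [hre t])).mp key
  intro t ht
  have h3 : ((starRingEnd ℂ) w * v t).re = m ^ 2 := by
    have := hzero t (Finset.mem_univ t)
    rcases mul_eq_zero.mp this with h | h
    · exact absurd h (ne_of_gt ht)
    · linarith
  -- norm of z := conj w * v t is at most m^2, re equals m^2, so z = m^2
  set z : ℂ := (starRingEnd ℂ) w * v t with hz_def
  have hznorm : ‖z‖ ≤ m ^ 2 := by
    rw [hz_def, norm_mul, RCLike.norm_conj, hw]
    calc m * ‖v t‖ ≤ m * m := by nlinarith [hm t]
      _ = m ^ 2 := by ring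
  have hzim : z.im = 0 := by
    have h4 : z.re ^ 2 + z.im ^ 2 = ‖z‖ ^ 2 := by
      rw [Complex.sq_norm, Complex.normSq_apply]; ring
    have h5 : ‖z‖ ^ 2 ≤ (m ^ 2) ^ 2 := by nlinarith [norm_nonneg z]
    nlinarith [h3, h4, h5]
  have hz : z = ((m ^ 2 : ℝ) : ℂ) := by
    apply Complex.ext
    · rw [h3, Complex.ofReal_re]
    · rw [hzim, Complex.ofReal_im]
  have hwne : (starRingEnd ℂ) w ≠ 0 := by
    simp only [ne_eq, map_eq_zero]
    intro h
    rw [h, norm_zero] at hw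
    exact absurd hw.symm (ne_of_gt hm0)
  have : (starRingEnd ℂ) w * v t = (starRingEnd ℂ) w * w := by rw [← hz_def, hz, hww]
  exact mul_left_cancel₀ hwne this


private lemma no_unimodular_eigenvalue (P : Matrix S S ℝ)
    (hnonneg : ∀ s t, 0 ≤ P s t) (hrow : ∀ s, ∑ t, P s t = 1)
    (hap : ¬ ∃ (d : ℕ) (hd : 1 < d) (A : Fin d → Finset S),
      (∀ i, (A i).Nonempty) ∧
      (∀ i j, i ≠ j → Disjoint (A i) (A j)) ∧
      (∀ i : Fin d, ∀ s ∈ A i, ∑ t ∈ A (i + ⟨1, hd⟩), P s t = 1))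
    (lam : ℂ) (hmod : ‖lam‖ = 1) (hne : lam ≠ 1)
    (v : S → ℂ) (hv : v ≠ 0)
    (heig : (P.map (Complex.ofReal)).mulVec v = lam • v) : False := by
  classical
  obtain ⟨s0, -, hs0⟩ := Finset.exists_max_image Finset.univ (fun t => ‖v t‖)
    Finset.univ_nonempty
  set m : ℝ := ‖v s0‖ with hm_def
  have hm : ∀ t, ‖v t‖ ≤ m := fun t => hs0 t (Finset.mem_univ t)
  have hm0 : 0 < m := by
    obtain ⟨t0, ht0⟩ : ∃ t, v t ≠ 0 := Function.ne_iff.mp hv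
    exact lt_of_lt_of_le (norm_pos_iff.mpr ht0) (hm t0)
  have hlam0 : lam ≠ 0 := by
    intro h; rw [h, norm_zero] at hmod; norm_num at hmod
  -- reachability claim
  have reach : ∀ (n : ℕ) (t : S), 0 < (P ^ n) s0 t → v t = lam ^ n * v s0 := by
    intro n
    induction n with
    | zero =>
      intro t ht
      rw [pow_zero] at ht
      by_cases hst : s0 = t
      · rw [← hst, pow_zero, one_mul]
      · rw [Matrix.one_apply_ne hst] at ht; exact absurd ht (lt_irrefl 0)
    | succ n ih =>
      intro t ht
      rw [pow_succ, Matrix.mul_apply] at ht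
      obtain ⟨x, hx⟩ : ∃ x, 0 < (P ^ n) s0 x * P x t := by
        by_contra h
        push_neg at h
        have : ∀ x ∈ Finset.univ, (P ^ n) s0 x * P x t = 0 := fun x _ =>
          le_antisymm (h x) (mul_nonneg (pow_entry_nonneg P hnonneg n s0 x) (hnonneg x t))
        rw [Finset.sum_congr rfl this, Finset.sum_const_zero] at ht
        exact lt_irrefl 0 ht
      have hx1 : 0 < (P ^ n) s0 x := by
        rcases mul_pos_iff.mp hx with ⟨h1, _⟩ | ⟨h1, h2⟩
        · exact h1
        · exact absurd h2 (not_lt.mpr (hnonneg x t))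
      have hx2 : 0 < P x t := by
        rcases mul_pos_iff.mp hx with ⟨_, h2⟩ | ⟨h1, _⟩
        · exact h2
        · exact absurd h1 (not_lt.mpr (pow_entry_nonneg P hnonneg n s0 x))
      have hvx : v x = lam ^ n * v s0 := ih x hx1
      have hnx : ‖v x‖ = m := by
        rw [hvx, norm_mul, norm_pow, hmod, one_pow, one_mul]
      have := step_eq P hnonneg hrow lam hmod v heig m hm0 hm x hnx t hx2
      rw [this, hvx, pow_succ]
      ring
  have wit : ∀ n : ℕ, ∃ t, 0 < (P ^ n) s0 t := fun n =>
    exists_pos_of_sum_one (fun t => pow_entry_nonneg P hnonneg n s0 t) (pow_row_sum P hrow n s0)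
  -- lam is a root of unity
  have hvs0 : v s0 ≠ 0 := by
    intro h; rw [hm_def, h, norm_zero] at hm0; exact lt_irrefl 0 hm0
  obtain ⟨a, -, b, -, hab, heq⟩ :
      ∃ a ∈ (Set.univ : Set ℕ), ∃ b ∈ (Set.univ : Set ℕ), a ≠ b ∧
        lam ^ a * v s0 = lam ^ b * v s0 := by
    apply Set.infinite_univ.exists_ne_map_eq_of_mapsTo (t := Set.range v)
    · intro n _
      obtain ⟨t, ht⟩ := wit n
      exact ⟨t, reach n t ht⟩
    · exact Set.finite_range v
  have hpow_eq : lam ^ a = lam ^ b := mul_right_cancel₀ hvs0 heq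
  -- get k > 0 with lam ^ k = 1
  obtain ⟨k, hk0, hk⟩ : ∃ k : ℕ, 0 < k ∧ lam ^ k = 1 := by
    rcases hab.lt_or_gt with h | h
    · refine ⟨b - a, Nat.sub_pos_of_lt h, ?_⟩
      have : lam ^ a * lam ^ (b - a) = lam ^ a * 1 := by
        rw [← pow_add, Nat.add_sub_cancel' (le_of_lt h), mul_one, hpow_eq]
      exact mul_left_cancel₀ (pow_ne_zero a hlam0) this
    · refine ⟨a - b, Nat.sub_pos_of_lt h, ?_⟩
      have : lam ^ b * lam ^ (a - b) = lam ^ b * 1 := by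
        rw [← pow_add, Nat.add_sub_cancel' (le_of_lt h), mul_one, hpow_eq]
      exact mul_left_cancel₀ (pow_ne_zero b hlam0) this
  set u : ℂˣ := Units.mk0 lam hlam0 with hu_def
  have huk : u ^ k = 1 := by
    ext
    rw [Units.val_pow_eq_pow_val]
    simpa [hu_def] using hk
  set d : ℕ := orderOf u with hd_def
  have hd_dvd : d ∣ k := orderOf_dvd_of_pow_eq_one huk
  have hd0 : d ≠ 0 := by
    intro h
    rw [h] at hd_dvd
    exact hk0.ne' (zero_dvd_iff.mp hd_dvd)
  have hune : u ≠ 1 := by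
    intro h
    apply hne
    have := congrArg Units.val h
    simpa [hu_def] using this
  have hd1 : d ≠ 1 := fun h => hune (orderOf_eq_one_iff.mp h)
  have hd : 1 < d := lt_of_le_of_ne (Nat.one_le_iff_ne_zero.mpr hd0) (Ne.symm hd1)
  have hpow_mod : ∀ n : ℕ, lam ^ (n % d) = lam ^ n := by
    intro n
    have h2 : (u : ℂ) ^ (n % d) = (u : ℂ) ^ n := by
      rw [← Units.val_pow_eq_pow_val, ← Units.val_pow_eq_pow_val, hd_def, pow_mod_orderOf]
    simpa [hu_def] using h2
  have hinj : ∀ i j : ℕ, i < d → j < d → lam ^ i = lam ^ j → i = j := by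
    intro i j hi hj hij
    have hu_eq : u ^ i = u ^ j := by
      ext; simpa [hu_def, Units.val_pow_eq_pow_val] using hij
    have := pow_eq_pow_iff_modEq.mp hu_eq
    rw [Nat.ModEq] at this
    rwa [← hd_def, Nat.mod_eq_of_lt hi, Nat.mod_eq_of_lt hj] at this
  -- define the cyclic sets
  set A : Fin d → Finset S := fun i =>
    Finset.univ.filter fun t => ∃ n : ℕ, n % d = i.val ∧ 0 < (P ^ n) s0 t with hA_def
  apply hap
  refine ⟨d, hd, A, ?_, ?_, ?_⟩
  · intro i
    obtain ⟨t, ht⟩ := wit i.val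
    exact ⟨t, Finset.mem_filter.mpr ⟨Finset.mem_univ t, i.val, Nat.mod_eq_of_lt i.isLt, ht⟩⟩
  · intro i j hij
    rw [Finset.disjoint_left]
    intro t hti htj
    obtain ⟨-, n1, hn1, hp1⟩ := Finset.mem_filter.mp hti
    obtain ⟨-, n2, hn2, hp2⟩ := Finset.mem_filter.mp htj
    have h1 : lam ^ n1 * v s0 = lam ^ n2 * v s0 := by
      rw [← reach n1 t hp1, ← reach n2 t hp2]
    have h2 : lam ^ n1 = lam ^ n2 := mul_right_cancel₀ hvs0 h1
    have h3 : lam ^ (n1 % d) = lam ^ (n2 % d) := by rw [hpow_mod, hpow_mod, h2]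
    have h4 : n1 % d = n2 % d := hinj _ _ (Nat.mod_lt _ (Nat.pos_of_ne_zero hd0))
      (Nat.mod_lt _ (Nat.pos_of_ne_zero hd0)) h3
    exact hij (Fin.ext (by rw [← hn1, ← hn2, h4]))
  · intro i t ht
    obtain ⟨-, n, hnd, hpos⟩ := Finset.mem_filter.mp ht
    have hsub : ∀ x, 0 < P t x → x ∈ A (i + ⟨1, hd⟩) := by
      intro x hx
      refine Finset.mem_filter.mpr ⟨Finset.mem_univ x, n + 1, ?_, ?_⟩
      · have hival : (i + (⟨1, hd⟩ : Fin d)).val = (i.val + 1) % d := by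
          simp [Fin.add_def]
        rw [hival]
        have : n % d = i.val % d := by rw [hnd, Nat.mod_eq_of_lt i.isLt]
        exact Nat.ModEq.add_right 1 this
      · have hstep : (P ^ (n + 1)) s0 x = ∑ y, (P ^ n) s0 y * P y x := by
          rw [pow_succ, Matrix.mul_apply]
        rw [hstep]
        have hle : (P ^ n) s0 t * P t x ≤ ∑ y, (P ^ n) s0 y * P y x :=
          Finset.single_le_sum (f := fun y => (P ^ n) s0 y * P y x)
            (fun y _ => mul_nonneg (pow_entry_nonneg P hnonneg n s0 y) (hnonneg y x))
            (Finset.mem_univ t)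
        exact lt_of_lt_of_le (mul_pos hpos hx) hle
    have : ∑ x ∈ A (i + ⟨1, hd⟩), P t x = ∑ x, P t x := by
      apply Finset.sum_subset (Finset.subset_univ _)
      intro x _ hxA
      by_contra h
      exact hxA (hsub x (lt_of_le_of_ne (hnonneg t x) (Ne.symm h)))
    rw [this, hrow]


private lemma mulVec_norm_le (P : Matrix S S ℝ) (hnonneg : ∀ s t, 0 ≤ P s t)
    (hrow : ∀ s, ∑ t, P s t = 1) (v : S → ℂ) :
    ‖(P.map (Complex.ofReal)).mulVec v‖ ≤ ‖v‖ := by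
  rw [pi_norm_le_iff_of_nonneg (norm_nonneg v)]
  intro s
  have h1 : (P.map (Complex.ofReal)).mulVec v s = ∑ t, (P s t : ℂ) * v t := by
    simp [Matrix.mulVec, dotProduct, Matrix.map_apply]
  rw [h1]
  calc ‖∑ t, ((P s t : ℂ) * v t)‖ ≤ ∑ t, ‖(P s t : ℂ) * v t‖ := norm_sum_le _ _
    _ = ∑ t, P s t * ‖v t‖ := by
        refine Finset.sum_congr rfl fun t _ => ?_
        rw [norm_mul, Complex.norm_real, Real.norm_eq_abs, abs_of_nonneg (hnonneg s t)]
    _ ≤ ∑ t, P s t * ‖v‖ := Finset.sum_le_sum fun t _ =>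
        mul_le_mul_of_nonneg_left (norm_le_pi_norm v t) (hnonneg s t)
    _ = ‖v‖ := by rw [← Finset.sum_mul, hrow, one_mul]

private lemma fixed_of_genEigen (f : Module.End ℂ (S → ℂ))
    (hb : ∀ (n : ℕ) (w : S → ℂ), ‖(f ^ n) w‖ ≤ ‖w‖) :
    ∀ (k : ℕ) (v : S → ℂ), ((f - 1) ^ k) v = 0 → f v = v := by
  intro k
  induction k with
  | zero =>
    intro v hv
    rw [pow_zero, Module.End.one_apply] at hv
    rw [hv, map_zero]
  | succ k ih =>
    intro v hv
    set c : S → ℂ := (f - 1) v with hc_def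
    have hc : ((f - 1) ^ k) c = 0 := by
      rw [hc_def, ← Module.End.mul_apply, ← pow_succ, hv]
    have hfc : f c = c := ih c hc
    have hfv : f v = v + c := by
      rw [hc_def]
      simp [LinearMap.sub_apply, Module.End.one_apply]
    have hiter : ∀ n : ℕ, (f ^ n) v = v + (n : ℂ) • c := by
      intro n
      induction n with
      | zero => simp
      | succ n ihn =>
        rw [pow_succ', Module.End.mul_apply, ihn, map_add, hfv, map_smul, hfc]
        push_cast
        rw [add_smul, one_smul]
        abel
    have hczero : c = 0 := by
      by_contra hc0
      obtain ⟨n, hn⟩ := exists_nat_gt (2 * ‖v‖ / ‖c‖)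
      have hcpos : 0 < ‖c‖ := norm_pos_iff.mpr hc0
      have h1 : ‖(f ^ n) v‖ ≤ ‖v‖ := hb n v
      have h2 : ‖(n : ℂ) • c‖ = n * ‖c‖ := by
        rw [norm_smul, Complex.norm_natCast]
      have h3 : ‖(n : ℂ) • c‖ ≤ ‖(f ^ n) v‖ + ‖v‖ := by
        have : (n : ℂ) • c = (f ^ n) v - v := by rw [hiter n]; abel
        rw [this]
        exact norm_sub_le _ _
      have h4 : (n : ℝ) * ‖c‖ ≤ 2 * ‖v‖ := by
        rw [← h2]; linarith
      rw [div_lt_iff₀ hcpos] at hn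
      linarith
    rw [hfv, hczero, add_zero]

private lemma tendsto_zero_of_genEigen (f : Module.End ℂ (S → ℂ)) (μ : ℂ) (hμ : ‖μ‖ < 1)
    (k : ℕ) (v : S → ℂ) (hv : ((f - μ • 1) ^ k) v = 0) :
    Tendsto (fun n : ℕ => (f ^ n) v) atTop (nhds 0) := by
  set N : Module.End ℂ (S → ℂ) := f - μ • 1 with hN_def
  have hcomm : Commute N (μ • (1 : Module.End ℂ (S → ℂ))) :=
    (Commute.one_right N).smul_right μ
  have hexp : ∀ n : ℕ, (f ^ n) v =
      ∑ m ∈ Finset.range (n + 1), ((n.choose m : ℂ) * μ ^ (n - m)) • ((N ^ m) v) := by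
    intro n
    have h := hcomm.add_pow n
    rw [sub_add_cancel] at h
    rw [h, LinearMap.sum_apply]
    refine Finset.sum_congr rfl fun m hm => ?_
    rw [Module.End.mul_apply, Module.End.mul_apply]
    rw [Module.End.natCast_apply, smul_pow, one_pow, LinearMap.smul_apply,
      Module.End.one_apply, map_smul, map_nsmul]
    rw [mul_smul, ← Nat.cast_smul_eq_nsmul ℂ (n.choose m) ((N ^ m) v), smul_comm]
  have htrunc : ∀ n : ℕ, k ≤ n → (f ^ n) v =
      ∑ m ∈ Finset.range k, ((n.choose m : ℂ) * μ ^ (n - m)) • ((N ^ m) v) := by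
    intro n hn
    rw [hexp n]
    symm
    apply Finset.sum_subset (Finset.range_subset_range.mpr (by omega))
    intro m _ hmk
    rw [Finset.mem_range, not_lt] at hmk
    have : (N ^ m) v = 0 := by
      have : N ^ m = N ^ (m - k) * N ^ k := by rw [← pow_add]; congr 1; omega
      rw [this, Module.End.mul_apply, hv, map_zero]
    rw [this, smul_zero]
  have hterm : ∀ m : ℕ, Tendsto (fun n : ℕ => ((n.choose m : ℂ) * μ ^ (n - m))) atTop (nhds 0) := by
    intro m
    set r : ℝ := ‖μ‖ with hr_def
    have hr0 : 0 ≤ r := norm_nonneg μ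
    set s : ℝ := (r + 1) / 2 with hs_def
    have hs0 : 0 < s := by rw [hs_def]; linarith
    have hs1 : s < 1 := by rw [hs_def]; linarith
    have hrs : r ≤ s := by rw [hs_def]; linarith
    apply squeeze_zero_norm' (a := fun n : ℕ => (s ^ m)⁻¹ * ((n : ℝ) ^ m * s ^ n))
    · filter_upwards [eventually_ge_atTop m] with n hn
      have hchoose : (n.choose m : ℝ) ≤ (n : ℝ) ^ m := by
        exact_mod_cast Nat.choose_le_pow n m
      calc ‖(n.choose m : ℂ) * μ ^ (n - m)‖ = (n.choose m : ℝ) * r ^ (n - m) := by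
            rw [norm_mul, norm_pow, Complex.norm_natCast, hr_def]
        _ ≤ (n : ℝ) ^ m * s ^ (n - m) := by
            apply mul_le_mul hchoose (pow_le_pow_left₀ hr0 hrs _) (pow_nonneg hr0 _)
              (pow_nonneg (Nat.cast_nonneg n) _)
        _ = (s ^ m)⁻¹ * ((n : ℝ) ^ m * s ^ n) := by
            rw [pow_sub₀ s hs0.ne' hn]
            ring
    · have h := (tendsto_pow_const_mul_const_pow_of_abs_lt_one m
        (by rw [abs_of_pos hs0]; exact hs1)).const_mul ((s ^ m)⁻¹)
      simpa using h
  apply Tendsto.congr' (f₁ := fun n : ℕ =>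
      ∑ m ∈ Finset.range k, ((n.choose m : ℂ) * μ ^ (n - m)) • ((N ^ m) v))
  · filter_upwards [eventually_ge_atTop k] with n hn
    exact (htrunc n hn).symm
  · have : Tendsto (fun n : ℕ =>
        ∑ m ∈ Finset.range k, ((n.choose m : ℂ) * μ ^ (n - m)) • ((N ^ m) v)) atTop
        (nhds (∑ m ∈ Finset.range k, (0 : S → ℂ))) := by
      apply tendsto_finset_sum
      intro m _
      have := (hterm m).smul_const ((N ^ m) v)
      simpa using this
    simpa using this


end MarkovAux

/-- **Convergence of transition probabilities for fully aperiodic finite Markov chains.**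
Let `S` be a nonempty finite state space and `P` a stochastic matrix on `S` (nonnegative
entries, each row summing to `1`). Suppose `P` is fully aperiodic: there is no `d > 1`
together with pairwise disjoint nonempty subsets `A_0, …, A_{d-1}` of `S` such that from
every state of `A_i` the chain moves into `A_{(i+1) mod d}` with probability `1`. Then for
all states `s, q`, the sequence `n ↦ (P^n) s q` of `n`-step transition probabilities
converges as `n → ∞`. -/
theorem markov_fully_aperiodic_converges {S : Type} [Fintype S] [Nonempty S]
    [DecidableEq S] (P : Matrix S S ℝ)
    (hnonneg : ∀ s t, 0 ≤ P s t) (hrow : ∀ s, ∑ t, P s t = 1)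
    (hap : ¬ ∃ (d : ℕ) (hd : 1 < d) (A : Fin d → Finset S),
      (∀ i, (A i).Nonempty) ∧
      (∀ i j, i ≠ j → Disjoint (A i) (A j)) ∧
      (∀ i : Fin d, ∀ s ∈ A i, ∑ t ∈ A (i + ⟨1, hd⟩), P s t = 1)) :
    ∀ s q : S, ∃ L : ℝ, Filter.Tendsto (fun n : ℕ => (P ^ n) s q) Filter.atTop (nhds L) := by
  classical
  intro s q
  set Q : Matrix S S ℂ := P.map (Complex.ofReal) with hQ_def
  set f : Module.End ℂ (S → ℂ) := Q.mulVecLin with hf_def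
  have hfpow : ∀ n : ℕ, (f ^ n : Module.End ℂ (S → ℂ)) = (Q ^ n).mulVecLin := by
    intro n
    induction n with
    | zero =>
      rw [pow_zero, pow_zero]
      ext w t
      simp [Matrix.mulVecLin_one]
    | succ n ih =>
      rw [pow_succ, ih, Module.End.mul_eq_comp, ← Matrix.mulVecLin_mul, ← pow_succ]
  have hbound : ∀ (n : ℕ) (w : S → ℂ), ‖(f ^ n) w‖ ≤ ‖w‖ := by
    intro n
    induction n with
    | zero => intro w; simp
    | succ n ih =>
      intro w
      rw [pow_succ', Module.End.mul_apply]
      calc ‖f ((f ^ n) w)‖ = ‖Q.mulVec ((f ^ n) w)‖ := by rw [hf_def, Matrix.mulVecLin_apply]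
        _ ≤ ‖(f ^ n) w‖ := mulVec_norm_le P hnonneg hrow _
        _ ≤ ‖w‖ := ih w
  -- the key convergence statement for every vector
  have hconv : ∀ v : S → ℂ, ∃ L : S → ℂ, Tendsto (fun n : ℕ => (f ^ n) v) atTop (nhds L) := by
    intro v
    have htop : v ∈ ⨆ μ : ℂ, f.maxGenEigenspace μ := by
      rw [Module.End.iSup_maxGenEigenspace_eq_top]
      exact Submodule.mem_top
    refine Submodule.iSup_induction (motive := fun v : S → ℂ =>
        ∃ L : S → ℂ, Tendsto (fun n : ℕ => (f ^ n) v) atTop (nhds L)) _ htop ?_ ?_ ?_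
    · -- generalized eigenvectors
      intro μ v hv
      by_cases hv0 : v = 0
      · exact ⟨0, by simp [hv0, tendsto_const_nhds]⟩
      obtain ⟨k, hk⟩ := (Module.End.mem_maxGenEigenspace f μ v).mp hv
      -- μ is a genuine eigenvalue
      have hval : f.HasEigenvalue μ := by
        have hne_bot : f.maxGenEigenspace μ ≠ ⊥ := by
          intro h
          rw [h, Submodule.mem_bot] at hv
          exact hv0 hv
        exact Module.End.HasUnifEigenvalue.lt zero_lt_one hne_bot
      obtain ⟨u, hu⟩ := hval.exists_hasEigenvector
      have huvec : f u = μ • u := hu.apply_eq_smul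
      have hune : u ≠ 0 := hu.right
      have hle : ‖μ‖ ≤ 1 := by
        have h1 : ‖f u‖ ≤ ‖u‖ := by
          have := hbound 1 u
          rwa [pow_one] at this
        rw [huvec, norm_smul] at h1
        have hupos : 0 < ‖u‖ := norm_pos_iff.mpr hune
        nlinarith
      rcases lt_or_eq_of_le hle with hlt | heq1
      · exact ⟨0, tendsto_zero_of_genEigen f μ hlt k v hk⟩
      · by_cases hμ1 : μ = 1
        · subst hμ1
          have hfix : f v = v := by
            apply fixed_of_genEigen f hbound k
            rwa [one_smul] at hk
          have : ∀ n : ℕ, (f ^ n) v = v := by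
            intro n
            induction n with
            | zero => simp
            | succ n ihn => rw [pow_succ', Module.End.mul_apply, ihn, hfix]
          exact ⟨v, by simp only [this]; exact tendsto_const_nhds⟩
        · exfalso
          apply no_unimodular_eigenvalue P hnonneg hrow hap μ heq1 hμ1 u hune
          rw [← hQ_def, ← Matrix.mulVecLin_apply, ← hf_def, huvec]
    · exact ⟨0, by simp [tendsto_const_nhds]⟩
    · rintro x y ⟨L1, hL1⟩ ⟨L2, hL2⟩
      exact ⟨L1 + L2, by simpa [map_add] using hL1.add hL2⟩
  obtain ⟨L, hL⟩ := hconv (Pi.single q 1)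
  refine ⟨(L s).re, ?_⟩
  have hentry : Tendsto (fun n : ℕ => ((f ^ n) (Pi.single q 1)) s) atTop (nhds (L s)) :=
    ((continuous_apply s).tendsto L).comp hL
  have heval : ∀ n : ℕ, ((f ^ n) (Pi.single q 1)) s = (((P ^ n) s q : ℝ) : ℂ) := by
    intro n
    rw [hfpow n, Matrix.mulVecLin_apply]
    have hQn : Q ^ n = (P ^ n).map (Complex.ofReal) := by
      have : Q = (Complex.ofRealHom : ℝ →+* ℂ).mapMatrix P := rfl
      rw [this, ← map_pow]
      rfl
    rw [Matrix.mulVec_single]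
    rw [hQn]
    simp [Matrix.map_apply]
  rw [show (fun n : ℕ => (P ^ n) s q) = fun n : ℕ => ((((P ^ n) s q : ℝ) : ℂ)).re from by
    funext n; rw [Complex.ofReal_re]]
  apply (Complex.continuous_re.tendsto (L s)).comp
  rw [show (fun n : ℕ => (((P ^ n) s q : ℝ) : ℂ)) = fun n : ℕ => ((f ^ n) (Pi.single q 1)) s from by
    funext n; rw [heval n]]
  exact hentry
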